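/- Let ABC be a triangle and λ, μ, ν positive reals with λ ≥ μ + ν. Then Y = A is the unique minimizer of F(Y) = λ·AY + μ·BY + ν·CY: for every Y ≠ A, F(Y) > F(A). -/
import Mathlib

theorem stmt_11 (a b c : EuclideanSpace ℝ (Fin 2)) (l m n : ℝ)
    (hnc : ¬ Collinear ℝ ({a, b, c} : Set (EuclideanSpace ℝ (Fin 2))))
    (hl : 0 < l) (hm : 0 < m) (hn : 0 < n) (h : m + n ≤ l)
    (y : EuclideanSpace ℝ (Fin 2)) (hy : y ≠ a) :
    l * dist a y + m * dist b y + n * dist c y > m * dist a b + n * dist a c := by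
  have h1 : dist a b ≤ dist a y + dist y b := dist_triangle a y b
  have h2 : dist a c ≤ dist a y + dist y c := dist_triangle a y c
  have hay : 0 < dist a y := dist_pos.2 (Ne.symm hy)
  rcases lt_or_eq_of_le h1 with h1' | h1'
  · nlinarith [dist_comm b y, dist_comm c y, dist_nonneg (x := c) (y := y),
      dist_nonneg (x := a) (y := y)]
  rcases lt_or_eq_of_le h2 with h2' | h2'
  · nlinarith [dist_comm b y, dist_comm c y, dist_nonneg (x := b) (y := y),
      dist_nonneg (x := a) (y := y)]
  -- equality in both: y is between a and b, and between a and c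
  exfalso
  have w1 : Wbtw ℝ a y b := dist_add_dist_eq_iff.1 h1'.symm
  have w2 : Wbtw ℝ a y c := dist_add_dist_eq_iff.1 h2'.symm
  have s1 : y ∈ segment ℝ a b := mem_segment_iff_wbtw.2 w1
  have s2 : y ∈ segment ℝ a c := mem_segment_iff_wbtw.2 w2
  obtain ⟨u, v, hu, hv, huv, hyab⟩ := s1
  obtain ⟨p, q, hp, hq, hpq, hyac⟩ := s2
  have hv' : v ≠ 0 := by
    rintro rfl
    apply hy
    rw [← hyab]
    simp [show u = 1 by linarith]
  have hq' : q ≠ 0 := by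
    rintro rfl
    apply hy
    rw [← hyac]
    simp [show p = 1 by linarith]
  have key : y - a = v • (b - a) := by
    rw [← hyab]
    have : u = 1 - v := by linarith
    rw [this]
    module
  have key2 : y - a = q • (c - a) := by
    rw [← hyac]
    have : p = 1 - q := by linarith
    rw [this]
    module
  apply hnc
  apply (collinear_iff_of_mem (Set.mem_insert a _)).2
  refine ⟨b - a, ?_⟩
  rintro x (rfl | rfl | rfl)
  · exact ⟨0, by simp⟩
  · exact ⟨1, by rw [one_smul]; simp only [vadd_eq_add]; abel⟩
  · refine ⟨v / q, ?_⟩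
    have hqv : q • (x - a) = v • (b - a) := key2 ▸ key
    have hc : x - a = (v / q) • (b - a) := by
      rw [div_eq_inv_mul, mul_smul, ← hqv, inv_smul_smul₀ hq']
    rw [← hc]
    simp only [vadd_eq_add]
    abel
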